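/- arXiv:2203.09334 — 2 statements merged into one kernel-verified Lean document; each statement's English description precedes it below -/
import Mathlib

section
/- Let G be a finite abelian group with |G| > 2n^2 + 2n, and let Q ⊆ G with |Q| ≤ n. For every subset P ⊆ Q there exist sets A₁, A₂ ⊆ G, each of size n, such that P ⊆ A₁ + A₂ (the sumset {a₁ + a₂ : a₁ ∈ A₁, a₂ ∈ A₂}) and (Q \ P) ∩ (A₁ + A₂) = ∅. -/
open Finset Pointwise

lemma extend_aux {G : Type*} [AddCommGroup G] [Fintype G] [DecidableEq G]
    (n : ℕ) (S : Finset G) (hS : S.card ≤ n) (hG : Fintype.card G > 2 * n ^ 2 + 2 * n) :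
    ∀ k (A₁ A₂ : Finset G), A₁.card ≤ n → A₂.card ≤ n →
      (n - A₁.card) + (n - A₂.card) ≤ k → (A₁ + A₂) ∩ S = ∅ →
      ∃ B₁ B₂ : Finset G, A₁ ⊆ B₁ ∧ A₂ ⊆ B₂ ∧ B₁.card = n ∧ B₂.card = n ∧
        (B₁ + B₂) ∩ S = ∅ := by
  intro k
  induction k with
  | zero =>
    intro A₁ A₂ h1 h2 hk hdisj
    refine ⟨A₁, A₂, Finset.Subset.refl _, Finset.Subset.refl _, ?_, ?_, hdisj⟩ <;> omega
  | succ k ih =>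
    intro A₁ A₂ h1 h2 hk hdisj
    rcases eq_or_lt_of_le h1 with he1 | hlt1
    · rcases eq_or_lt_of_le h2 with he2 | hlt2
      · exact ⟨A₁, A₂, Finset.Subset.refl _, Finset.Subset.refl _, he1, he2, hdisj⟩
      · -- extend A₂
        have hF : (A₂ ∪ (S - A₁)).card < Fintype.card G := by
          calc (A₂ ∪ (S - A₁)).card ≤ A₂.card + (S - A₁).card := Finset.card_union_le _ _
            _ ≤ n + S.card * A₁.card := by
                gcongr
                exact Finset.card_image₂_le _ _ _
            _ ≤ n + n * n := by gcongr
            _ < Fintype.card G := by nlinarith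
        have : ((A₂ ∪ (S - A₁))ᶜ).Nonempty := by
          rw [← Finset.card_pos, Finset.card_compl]
          omega
        obtain ⟨x, hx⟩ := this
        rw [Finset.mem_compl, Finset.mem_union, not_or] at hx
        have hdisj' : (A₁ + insert x A₂) ∩ S = ∅ := by
          rw [Finset.eq_empty_iff_forall_notMem]
          intro y hy
          rw [Finset.mem_inter, Finset.mem_add] at hy
          obtain ⟨⟨a, ha, b, hb, hab⟩, hyS⟩ := hy
          rw [Finset.mem_insert] at hb
          rcases hb with rfl | hb
          · exact hx.2 (Finset.mem_sub.mpr ⟨y, hyS, a, ha, by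
              rw [← hab]; abel⟩)
          · have : a + b ∈ (A₁ + A₂) ∩ S := by
              rw [Finset.mem_inter]
              exact ⟨Finset.add_mem_add ha hb, hab ▸ hyS⟩
            rw [hdisj] at this
            exact absurd this (Finset.notMem_empty _)
        have hcard : (insert x A₂).card = A₂.card + 1 := Finset.card_insert_of_notMem hx.1
        obtain ⟨B₁, B₂, hB1, hB2, hc1, hc2, hd⟩ := ih A₁ (insert x A₂) h1 (by omega)
          (by omega) hdisj'
        exact ⟨B₁, B₂, hB1, (Finset.subset_insert _ _).trans hB2, hc1, hc2, hd⟩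
    · -- extend A₁
      have hF : (A₁ ∪ (S - A₂)).card < Fintype.card G := by
        calc (A₁ ∪ (S - A₂)).card ≤ A₁.card + (S - A₂).card := Finset.card_union_le _ _
          _ ≤ n + S.card * A₂.card := by
              gcongr
              exact Finset.card_image₂_le _ _ _
          _ ≤ n + n * n := by gcongr
          _ < Fintype.card G := by nlinarith
      have : ((A₁ ∪ (S - A₂))ᶜ).Nonempty := by
        rw [← Finset.card_pos, Finset.card_compl]
        omega
      obtain ⟨x, hx⟩ := this
      rw [Finset.mem_compl, Finset.mem_union, not_or] at hx
      have hdisj' : (insert x A₁ + A₂) ∩ S = ∅ := by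
        rw [Finset.eq_empty_iff_forall_notMem]
        intro y hy
        rw [Finset.mem_inter, Finset.mem_add] at hy
        obtain ⟨⟨a, ha, b, hb, hab⟩, hyS⟩ := hy
        rw [Finset.mem_insert] at ha
        rcases ha with rfl | ha
        · exact hx.2 (Finset.mem_sub.mpr ⟨y, hyS, b, hb, by
            rw [← hab]; abel⟩)
        · have : a + b ∈ (A₁ + A₂) ∩ S := by
            rw [Finset.mem_inter]
            exact ⟨Finset.add_mem_add ha hb, hab ▸ hyS⟩
          rw [hdisj] at this
          exact absurd this (Finset.notMem_empty _)
      have hcard : (insert x A₁).card = A₁.card + 1 := Finset.card_insert_of_notMem hx.1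
      obtain ⟨B₁, B₂, hB1, hB2, hc1, hc2, hd⟩ := ih (insert x A₁) A₂ (by omega) h2
        (by omega) hdisj'
      exact ⟨B₁, B₂, (Finset.subset_insert _ _).trans hB1, hB2, hc1, hc2, hd⟩

theorem stmt_0 {G : Type*} [AddCommGroup G] [Fintype G] [DecidableEq G]
    (n : ℕ) (hn : 0 < n) (hG : Fintype.card G > 2 * n ^ 2 + 2 * n)
    (Q : Finset G) (hQ : Q.card ≤ n) (P : Finset G) (hP : P ⊆ Q) :
    ∃ A₁ A₂ : Finset G, A₁.card = n ∧ A₂.card = n ∧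
      ↑P ⊆ A₁ + A₂ ∧ (Q \ P) ∩ (A₁ + A₂) = ∅ := by
  have hS : (Q \ P).card ≤ n := le_trans (Finset.card_le_card (Finset.sdiff_subset)) hQ
  have hPn : P.card ≤ n := le_trans (Finset.card_le_card hP) hQ
  have hinit : (({0} : Finset G) + P) ∩ (Q \ P) = ∅ := by
    have h0 : ({0} : Finset G) + P = P := by
      ext y; simp [Finset.mem_add]
    rw [h0]
    exact Finset.inter_sdiff_self P Q
  obtain ⟨B₁, B₂, hB1, hB2, hc1, hc2, hd⟩ :=
    extend_aux n (Q \ P) hS hG (2 * n) {0} P (by simp; omega) hPn (by omega) hinit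
  refine ⟨B₁, B₂, hc1, hc2, ?_, ?_⟩
  · intro p hp
    have hpP : p ∈ P := by simpa using hp
    have h0 : (0 : G) ∈ B₁ := hB1 (Finset.mem_singleton_self 0)
    have hpB : p ∈ B₂ := hB2 hpP
    have : p ∈ B₁ + B₂ := by
      rw [Finset.mem_add]; exact ⟨0, h0, p, hpB, zero_add p⟩
    simpa using this
  · rw [Finset.inter_comm]
    exact hd
end

section
/- Let G be a finite abelian group with |G| > 2n² + 2n, and let Q ⊆ G with |Q| = m ≤ n. There exists a probability distribution D over pairs (A₁, A₂) of subsets of G such that the m events {q ∈ A₁ + A₂} for q ∈ Q are mutually independent and each has probability exactly 1/2 under D. -/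
open Finset Pointwise

theorem exists_pattern {G : Type*} [AddCommGroup G] [Fintype G] [DecidableEq G]
    (n : ℕ) (hG : Fintype.card G > 2 * n ^ 2 + 2 * n)
    (Q : Finset G) (hQn : Q.card ≤ n) :
    ∀ P ⊆ Q, ∃ A₁ A₂ : Finset G, (A₁ + A₂) ∩ Q = P ∧ A₁.card ≤ P.card ∧ A₂.card ≤ P.card := by
  intro P
  induction P using Finset.induction_on with
  | empty => intro _; exact ⟨∅, ∅, by simp, by simp, by simp⟩
  | @insert a s ha ih =>
    intro hins
    obtain ⟨A₁, A₂, hAQ, h1, h2⟩ := ih ((Finset.subset_insert a s).trans hins)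
    have hsn : s.card ≤ n := le_trans (Finset.card_le_card ((Finset.subset_insert a s).trans hins)) hQn
    set B : Finset G := (Q + -A₂) ∪ (A₁ + {a} + -Q) with hB
    have hBcard : B.card < Fintype.card G := by
      have c1 : (Q + -A₂).card ≤ Q.card * A₂.card := by
        simpa using (Finset.card_add_le (s := Q) (t := -A₂))
      have c2 : (A₁ + {a} + -Q).card ≤ A₁.card * 1 * Q.card := by
        refine le_trans (Finset.card_add_le) (Nat.mul_le_mul ?_ (le_of_eq (Finset.card_neg Q)))
        simpa using (Finset.card_add_le (s := A₁) (t := ({a} : Finset G)))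
      have hb : B.card ≤ n * n + n * n := by
        calc B.card ≤ (Q + -A₂).card + (A₁ + {a} + -Q).card := Finset.card_union_le _ _
        _ ≤ n * n + n * n := by
            refine Nat.add_le_add (le_trans c1 ?_) (le_trans c2 ?_)
            · exact Nat.mul_le_mul hQn (le_trans h2 hsn)
            · simpa using Nat.mul_le_mul (le_trans h1 hsn) hQn
      nlinarith
    obtain ⟨x, hx⟩ : ∃ x, x ∉ B := by
      by_contra hc
      push_neg at hc
      have : B = Finset.univ := Finset.eq_univ_of_forall hc
      rw [this, Finset.card_univ] at hBcard
      omega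
    have hxQ : x ∉ Q + -A₂ := fun h => hx (Finset.mem_union_left _ h)
    have hxA : x ∉ A₁ + {a} + -Q := fun h => hx (Finset.mem_union_right _ h)
    refine ⟨insert x A₁, insert (a - x) A₂, ?_, ?_, ?_⟩
    · ext y
      simp only [Finset.mem_inter, Finset.mem_add, Finset.mem_insert]
      constructor
      · rintro ⟨⟨u, hu, v, hv, huv⟩, hyQ⟩
        rcases hu with rfl | hu <;> rcases hv with rfl | hv
        · left; rw [← huv]; abel
        · exfalso
          refine hxQ (Finset.mem_add.2 ⟨y, hyQ, -v, Finset.neg_mem_neg hv, ?_⟩)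
          rw [← huv]; abel
        · exfalso
          refine hxA (Finset.mem_add.2 ⟨u + a, Finset.mem_add.2 ⟨u, hu, a, Finset.mem_singleton_self a, rfl⟩, -y, Finset.neg_mem_neg hyQ, ?_⟩)
          rw [← huv]; abel
        · right
          have hm : y ∈ (A₁ + A₂) ∩ Q :=
            Finset.mem_inter.2 ⟨Finset.mem_add.2 ⟨u, hu, v, hv, huv⟩, hyQ⟩
          rw [hAQ] at hm; exact hm
      · rintro (rfl | hy)
        · exact ⟨⟨x, Or.inl rfl, y - x, Or.inl rfl, by abel⟩, hins (Finset.mem_insert_self _ s)⟩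
        · have hm : y ∈ (A₁ + A₂) ∩ Q := by rw [hAQ]; exact hy
          obtain ⟨hsum, hyQ⟩ := Finset.mem_inter.1 hm
          obtain ⟨u, hu, v, hv, huv⟩ := Finset.mem_add.1 hsum
          exact ⟨⟨u, Or.inr hu, v, Or.inr hv, huv⟩, hyQ⟩
    · exact le_trans (Finset.card_insert_le _ _) (by rw [Finset.card_insert_of_notMem ha]; omega)
    · exact le_trans (Finset.card_insert_le _ _) (by rw [Finset.card_insert_of_notMem ha]; omega)

theorem count_pattern {α : Type*} [DecidableEq α] (Q S F : Finset α) (hS : S ⊆ Q) (hF : F ⊆ S) :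
    (Q.powerset.filter (fun P => P ∩ S = F)).card = 2 ^ (Q.card - S.card) := by
  rw [← Finset.card_sdiff_of_subset hS, ← Finset.card_powerset]
  apply Finset.card_bij (fun P _ => P \ S)
  · intro P hP
    rw [Finset.mem_filter, Finset.mem_powerset] at hP
    exact Finset.mem_powerset.2 (Finset.sdiff_subset_sdiff hP.1 Finset.Subset.rfl)
  · intro P₁ hP₁ P₂ hP₂ h
    rw [Finset.mem_filter] at hP₁ hP₂
    calc P₁ = P₁ \ S ∪ P₁ ∩ S := (Finset.sdiff_union_inter P₁ S).symm
    _ = P₂ \ S ∪ P₂ ∩ S := by rw [h, hP₁.2, hP₂.2]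
    _ = P₂ := Finset.sdiff_union_inter P₂ S
  · intro R hR
    rw [Finset.mem_powerset] at hR
    have hRS : Disjoint R S := Finset.disjoint_left.2 fun x hx hxS =>
      (Finset.mem_sdiff.1 (hR hx)).2 hxS
    refine ⟨R ∪ F, ?_, ?_⟩
    · rw [Finset.mem_filter, Finset.mem_powerset]
      constructor
      · exact Finset.union_subset (hR.trans Finset.sdiff_subset) (hF.trans hS)
      · rw [Finset.union_inter_distrib_right, Finset.inter_eq_left.2 hF,
          (Finset.disjoint_iff_inter_eq_empty.1 hRS), Finset.empty_union]
    · rw [Finset.union_sdiff_distrib, Finset.sdiff_eq_self_of_disjoint hRS,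
        Finset.sdiff_eq_empty_iff_subset.2 hF, Finset.union_empty]

theorem stmt_17 {G : Type*} [AddCommGroup G] [Fintype G] [DecidableEq G]
    (n m : ℕ) (hn : 0 < n) (hG : Fintype.card G > 2 * n ^ 2 + 2 * n)
    (Q : Finset G) (hQ : Q.card = m) (hm : m ≤ n) :
    ∃ D : Finset G × Finset G → ℝ,
      (∀ p, 0 ≤ D p) ∧ (∑ p : Finset G × Finset G, D p = 1) ∧
      (∀ q ∈ Q, ∑ p ∈ Finset.univ.filter (fun p : Finset G × Finset G => q ∈ p.1 + p.2), D p
          = 1 / 2) ∧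
      (∀ S ⊆ Q, ∀ ε : G → Bool,
        ∑ p ∈ Finset.univ.filter
            (fun p : Finset G × Finset G => ∀ q ∈ S, decide (q ∈ p.1 + p.2) = ε q), D p
          = (1 / 2) ^ S.card) := by
  classical
  have key := exists_pattern n hG Q (hQ ▸ hm)
  set pair : Finset G → Finset G × Finset G := fun P =>
    if h : P ⊆ Q then ((key P h).choose, (key P h).choose_spec.choose) else (∅, ∅) with hpairdef
  have hpair : ∀ P (h : P ⊆ Q), ((pair P).1 + (pair P).2) ∩ Q = P := by
    intro P h
    simp only [hpairdef, dif_pos h]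
    exact (key P h).choose_spec.choose_spec.1
  set D : Finset G × Finset G → ℝ := fun p =>
    (1 / 2) ^ m * ((Q.powerset.filter (fun P => pair P = p)).card : ℝ) with hDdef
  have hsum : ∀ T : Finset (Finset G × Finset G),
      ∑ p ∈ T, D p = (1 / 2) ^ m * ((Q.powerset.filter (fun P => pair P ∈ T)).card : ℝ) := by
    intro T
    rw [← Finset.mul_sum]
    congr 1
    rw [← Nat.cast_sum]
    congr 1
    have hfib := Finset.card_eq_sum_card_fiberwise
      (s := Q.powerset.filter (fun P => pair P ∈ T)) (t := T) (f := pair)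
      (fun P hP => (Finset.mem_filter.1 hP).2)
    rw [hfib]
    apply Finset.sum_congr rfl
    intro p hp
    congr 1
    rw [Finset.filter_filter]
    apply Finset.filter_congr
    intro P _
    constructor
    · rintro rfl; exact ⟨hp, rfl⟩
    · exact fun h => h.2
  have hd : ∀ S ⊆ Q, ∀ ε : G → Bool,
      ∑ p ∈ Finset.univ.filter
          (fun p : Finset G × Finset G => ∀ q ∈ S, decide (q ∈ p.1 + p.2) = ε q), D p
        = (1 / 2) ^ S.card := by
    intro S hSQ ε
    rw [hsum]
    have hcount : Q.powerset.filter
        (fun P => pair P ∈ Finset.univ.filter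
          (fun p : Finset G × Finset G => ∀ q ∈ S, decide (q ∈ p.1 + p.2) = ε q))
        = Q.powerset.filter (fun P => P ∩ S = S.filter (fun q => ε q = true)) := by
      apply Finset.filter_congr
      intro P hP
      rw [Finset.mem_powerset] at hP
      simp only [Finset.mem_filter, Finset.mem_univ, true_and]
      have hiff : ∀ q ∈ S, (q ∈ (pair P).1 + (pair P).2 ↔ q ∈ P) := by
        intro q hq
        constructor
        · intro h
          have : q ∈ ((pair P).1 + (pair P).2) ∩ Q := Finset.mem_inter.2 ⟨h, hSQ hq⟩
          rwa [hpair P hP] at this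
        · intro h
          have : q ∈ ((pair P).1 + (pair P).2) ∩ Q := by rw [hpair P hP]; exact h
          exact (Finset.mem_inter.1 this).1
      constructor
      · intro h
        ext q
        simp only [Finset.mem_inter, Finset.mem_filter]
        constructor
        · rintro ⟨hqP, hqS⟩
          refine ⟨hqS, ?_⟩
          rw [← h q hqS]
          exact decide_eq_true ((hiff q hqS).2 hqP)
        · rintro ⟨hqS, hqe⟩
          refine ⟨?_, hqS⟩
          have := h q hqS
          rw [hqe] at this
          exact (hiff q hqS).1 (of_decide_eq_true this)
      · intro h q hq
        have hmem : q ∈ P ↔ ε q = true := by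
          constructor
          · intro hqP
            have : q ∈ P ∩ S := Finset.mem_inter.2 ⟨hqP, hq⟩
            rw [h] at this
            exact (Finset.mem_filter.1 this).2
          · intro hε
            have : q ∈ P ∩ S := by rw [h]; exact Finset.mem_filter.2 ⟨hq, hε⟩
            exact (Finset.mem_inter.1 this).1
        rw [decide_eq_decide.mpr (hiff q hq)]
        cases hε : ε q
        · simp only [decide_eq_false_iff_not]
          intro hqP
          have htt := hmem.1 hqP
          rw [hε] at htt
          exact Bool.false_ne_true htt
        · exact decide_eq_true (hmem.2 hε)
    rw [hcount, count_pattern Q S (S.filter (fun q => ε q = true)) hSQ (Finset.filter_subset _ _), hQ]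
    have hs : S.card ≤ m := hQ ▸ Finset.card_le_card hSQ
    have : ((2 : ℝ)) ^ (m - S.card) = 2 ^ m * (1 / 2) ^ S.card := by
      rw [eq_comm, ← Nat.sub_add_cancel hs, pow_add]
      field_simp
      rw [Nat.add_sub_cancel, mul_assoc, ← mul_pow]; norm_num
    push_cast
    rw [this]
    rw [← mul_assoc, ← mul_pow]
    norm_num
  refine ⟨D, ?_, ?_, ?_, hd⟩
  · intro p
    positivity
  · rw [hsum Finset.univ]
    have : Q.powerset.filter (fun P => pair P ∈ Finset.univ) = Q.powerset :=
      Finset.filter_true_of_mem (fun _ _ => Finset.mem_univ _)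
    rw [this, Finset.card_powerset, hQ]
    push_cast
    rw [← mul_pow]
    norm_num
  · intro q hq
    have := hd {q} (by simpa using hq) (fun _ => true)
    rw [Finset.card_singleton, pow_one] at this
    rw [← this]
    congr 1
    apply Finset.filter_congr
    intro p _
    simp
end
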